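/- P·C = X_n·P, where P is the lower triangular matrix with (P)_{ij} = q_{i-j}/(j-1)! for i ≥ j (with q_0 = 1), C is the companion matrix of Q(x) = x^n + n q_1 x^{n-1} + n(n-1) q_2 x^{n-2} + ... + n! q_n, and X_n is the Newton-identity matrix. In particular, since P is invertible, X_n is similar to C and hence has characteristic polynomial Q(x). -/

import Mathlib

open Polynomial Matrix


private lemma alg1 (A B F NF Dc Nc Jc qb : ℂ) (hA : A ≠ 0) (_hB : B ≠ 0) (hJ : Jc ≠ 0)
    (hF : Jc * A = F) (hN : Nc * B = NF) (hD : Dc * F = NF) :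
    qb / A + 1/B * -(Dc * qb) = -(Nc - Jc) * qb / F := by
  have hDc : Dc = Nc * B / (Jc * A) := by
    rw [eq_div_iff (mul_ne_zero hJ hA), hF, hD, ← hN]
  rw [hDc, ← hF]
  field_simp
  ring

private lemma alg2 (A F Jc iv qb : ℂ) (hJ : Jc ≠ 0) (hF : Jc * A = F) :
    qb / A = -(iv - Jc + 1) * qb / F + (iv + 1) * (qb / F) := by
  rw [← hF]
  have h1 : -(iv - Jc + 1) * qb / (Jc * A) + (iv + 1) * (qb / (Jc * A)) = Jc * qb / (Jc * A) := by
    ring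
  rw [h1, mul_div_mul_left qb A hJ]

private lemma alg3 (B NF Dc Nc qn : ℂ) (hB : B ≠ 0) (hN : Nc * B = NF) (hD : Dc = NF) :
    1 / B * -(Dc * qn) = -Nc * qn := by
  rw [hD, ← hN]
  field_simp

private lemma alg4 (A F Jc : ℂ) (hJ : Jc ≠ 0) (hF : Jc * A = F) :
    1 / A = Jc * (1 / F) := by
  rw [← hF]
  have h1 : Jc * (1 / (Jc * A)) = Jc * 1 / (Jc * A) := by ring
  rw [h1, mul_div_mul_left 1 A hJ]



lemma charpoly_conj_aux {n : ℕ} (P A B : Matrix (Fin n) (Fin n) ℂ) (hP : IsUnit P.det)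
    (h : P * A = B * P) : A.charpoly = B.charpoly := by
  have hmap : (P.map (C : ℂ →+* ℂ[X])) * charmatrix A = charmatrix B * (P.map C) := by
    have h2 : (P * A).map (C : ℂ →+* ℂ[X]) = (B * P).map C := by rw [h]
    rw [Matrix.map_mul, Matrix.map_mul] at h2
    simp only [charmatrix, RingHom.mapMatrix_apply, Matrix.mul_sub, Matrix.sub_mul, h2]
    congr 1
    exact (Matrix.scalar_commute X (Commute.all X) (P.map C)).symm
  have hdet : ((P.map (C : ℂ →+* ℂ[X])).det) ≠ 0 := by
    have h4 : (P.map (C : ℂ →+* ℂ[X])).det = C P.det := by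
      rw [← RingHom.mapMatrix_apply, ← RingHom.map_det]
    rw [h4, ne_eq, Polynomial.C_eq_zero]
    exact hP.ne_zero
  have h3 := congrArg Matrix.det hmap
  rw [Matrix.det_mul, Matrix.det_mul] at h3
  unfold Matrix.charpoly
  exact mul_right_cancel₀ hdet (by rw [mul_comm] at h3; rw [h3])


lemma companion_charpoly (n : ℕ) : ∀ c : ℕ → ℂ,
    (Matrix.of fun i j : Fin n => if (j:ℕ) = (i:ℕ)+1 then (1:ℂ)
      else if (i:ℕ) = n-1 then -(c (j:ℕ)) else 0).charpoly
    = X^n + ∑ j ∈ Finset.range n, C (c j) * X^j := by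
  induction n with
  | zero =>
    intro c
    simp [Matrix.charpoly, Matrix.det_fin_zero]
  | succ m ih =>
    intro c
    match m with
    | 0 =>
      simp [Matrix.charpoly, Matrix.det_fin_one, charmatrix_apply_eq]
    | Nat.succ n =>
      set M : Matrix (Fin (n+2)) (Fin (n+2)) ℂ := Matrix.of fun i j : Fin (n+2) =>
        if (j:ℕ) = (i:ℕ)+1 then (1:ℂ) else if (i:ℕ) = n+2-1 then -(c (j:ℕ)) else 0 with hM
      rw [Matrix.charpoly, Matrix.det_succ_column_zero]
      have hzero : ∀ i ∈ (Finset.univ : Finset (Fin (n+2))), i ∉ ({0, Fin.last (n+1)} : Finset (Fin (n+2))) →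
          (-1 : ℂ[X]) ^ (i:ℕ) * (charmatrix M) i 0 * ((charmatrix M).submatrix i.succAbove Fin.succ).det = 0 := by
        intro i _ hi
        simp only [Finset.mem_insert, Finset.mem_singleton] at hi
        push_neg at hi
        have h1 : i ≠ 0 := hi.1
        have h2 : (i:ℕ) ≠ n+1 := by
          intro h; exact hi.2 (Fin.ext (by simp [h, Fin.val_last]))
        rw [charmatrix_apply_ne _ _ _ h1]
        have : M i 0 = 0 := by
          simp only [hM, Matrix.of_apply]
          rw [if_neg (by simp only [Fin.val_zero]; omega), if_neg (by omega)]
        rw [this]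
        simp
      rw [← Finset.sum_subset (Finset.subset_univ ({0, Fin.last (n+1)} : Finset (Fin (n+2)))) hzero]
      rw [Finset.sum_pair (by simp [Fin.ext_iff])]
      -- term at 0
      have hM00 : (charmatrix M) 0 0 = X := by
        rw [charmatrix_apply_eq]
        have : M 0 0 = 0 := by
          simp only [hM, Matrix.of_apply]
          rw [if_neg (by simp only [Fin.val_zero]; omega), if_neg (by simp only [Fin.val_zero]; omega)]
        rw [this]; simp
      have hminor0 : (charmatrix M).submatrix (0 : Fin (n+2)).succAbove Fin.succ
          = charmatrix (Matrix.of fun i j : Fin (n+1) => if (j:ℕ) = (i:ℕ)+1 then (1:ℂ)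
              else if (i:ℕ) = n+1-1 then -(c ((j:ℕ)+1)) else 0) := by
        ext i j
        rw [Fin.succAbove_zero]
        simp only [Matrix.submatrix_apply, charmatrix_apply, Matrix.diagonal_apply, Matrix.of_apply]
        have hd : (Fin.succ i = Fin.succ j) ↔ (i = j) := by simp [Fin.ext_iff]
        have he : M i.succ j.succ = (if (j:ℕ) = (i:ℕ)+1 then (1:ℂ)
            else if (i:ℕ) = n+1-1 then -(c ((j:ℕ)+1)) else 0) := by
          simp only [hM, Matrix.of_apply, Fin.val_succ]
          by_cases h1 : (j:ℕ) = (i:ℕ)+1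
          · rw [if_pos (by omega), if_pos h1]
          · rw [if_neg (by omega), if_neg h1]
            by_cases h2 : (i:ℕ) = n
            · rw [if_pos (by omega), if_pos (by omega)]
            · rw [if_neg (by omega), if_neg (by omega)]
        rw [he]
        by_cases hij : i = j
        · rw [if_pos (hd.mpr hij), if_pos hij]
        · rw [if_neg (fun h => hij (hd.mp h)), if_neg hij]
      have hdet0 : ((charmatrix M).submatrix (0 : Fin (n+2)).succAbove Fin.succ).det
          = X^(n+1) + ∑ j ∈ Finset.range (n+1), C (c (j+1)) * X^j := by
        rw [hminor0, ← Matrix.charpoly, ih (fun t => c (t+1))]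
      -- term at last
      have hMlast0 : (charmatrix M) (Fin.last (n+1)) 0 = C (c 0) := by
        rw [charmatrix_apply_ne _ _ _ (by simp [Fin.ext_iff])]
        have : M (Fin.last (n+1)) 0 = -(c 0) := by
          simp only [hM, Matrix.of_apply]
          rw [if_neg (by simp only [Fin.val_last, Fin.val_zero]; omega), if_pos (by simp only [Fin.val_last, Fin.val_zero]; omega)]
          rfl
        rw [this]; simp
      have hminorL : ((charmatrix M).submatrix (Fin.last (n+1)).succAbove Fin.succ).det = (-1)^(n+1) := by
        have hlow : ((charmatrix M).submatrix (Fin.last (n+1)).succAbove Fin.succ).BlockTriangular OrderDual.toDual := by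
          intro i j hij
          have hij' : i < j := hij
          rw [Fin.succAbove_last]
          simp only [Matrix.submatrix_apply]
          rw [charmatrix_apply_ne _ _ _ (by
            simp only [ne_eq, Fin.ext_iff, Fin.coe_castSucc, Fin.val_succ]
            have : (i:ℕ) < (j:ℕ) := hij'
            omega)]
          have : M i.castSucc j.succ = 0 := by
            simp only [hM, Matrix.of_apply, Fin.coe_castSucc, Fin.val_succ]
            have hi : (i:ℕ) < n+1 := i.isLt
            have : (i:ℕ) < (j:ℕ) := hij'
            rw [if_neg (by omega), if_neg (by omega)]
          rw [this]; simp
        rw [Matrix.det_of_lowerTriangular _ hlow]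
        have : ∀ i : Fin (n+1), ((charmatrix M).submatrix (Fin.last (n+1)).succAbove Fin.succ) i i = -1 := by
          intro i
          rw [Fin.succAbove_last]
          simp only [Matrix.submatrix_apply]
          rw [charmatrix_apply_ne _ _ _ (by simp [Fin.ext_iff])]
          have : M i.castSucc i.succ = 1 := by
            simp only [hM, Matrix.of_apply, Fin.coe_castSucc, Fin.val_succ]
            simp
          rw [this]; simp
        rw [Finset.prod_congr rfl (fun i _ => this i)]
        simp [Finset.prod_const]
      rw [hM00, hdet0, hMlast0, hminorL]
      rw [Finset.sum_range_succ' (fun j => C (c j) * X^j) (n+1)]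
      simp only [Fin.val_zero, pow_zero, one_mul, Fin.val_last]
      have hpow : ((-1:ℂ[X])^(n+1)) * ((-1:ℂ[X])^(n+1)) = 1 := by
        rw [← pow_add]
        exact Even.neg_one_pow ⟨n+1, rfl⟩
      have h5 : (-1:ℂ[X])^(n+1) * C (c 0) * (-1)^(n+1) = C (c 0) := by
        rw [mul_comm, ← mul_assoc, hpow, one_mul]
      rw [h5, mul_add, Finset.mul_sum]
      have hsum : ∑ j ∈ Finset.range (n+1), X * (C (c (j+1)) * X^j)
          = ∑ j ∈ Finset.range (n+1), C (c (j+1)) * X^(j+1) :=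
        Finset.sum_congr rfl (fun j _ => by ring)
      rw [hsum]
      have hns : n.succ + 1 = n + 2 := rfl
      rw [hns]
      ring

/-- P·C = X_n·P where P is the lower triangular matrix with entries q_{i-j}/(j-1)!,
    C is the companion matrix of Q(x) = x^n + Σ n(n-1)⋯(n-k+1) q_k x^{n-k}, and X_n is
    the Newton-identity matrix; in particular X_n has characteristic polynomial Q. -/
theorem newton_matrix_similar_companion (n : ℕ) (q : ℕ → ℂ) (hq0 : q 0 = 1)
    (x : ℕ → ℂ)
    (hnewton : ∀ k, 1 ≤ k → k ≤ n →
      x k + (∑ j ∈ Finset.Icc 1 (k - 1), q j * x (k - j)) + (k : ℂ) * q k = 0)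
    (Xn P Cmat : Matrix (Fin n) (Fin n) ℂ)
    (hXn : ∀ i j : Fin n, Xn i j =
      if (j : ℕ) ≤ (i : ℕ) then x ((i : ℕ) - (j : ℕ) + 1)
      else if (j : ℕ) = (i : ℕ) + 1 then ((j : ℕ) : ℂ) else 0)
    (hP : ∀ i j : Fin n, P i j =
      if (j : ℕ) ≤ (i : ℕ) then q ((i : ℕ) - (j : ℕ)) / ((j : ℕ).factorial : ℂ) else 0)
    (hC : ∀ i j : Fin n, Cmat i j =
      if (j : ℕ) = (i : ℕ) + 1 then 1
      else if (i : ℕ) = n - 1 then -((n.descFactorial (n - (j : ℕ)) : ℂ) * q (n - (j : ℕ)))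
      else 0) :
    P * Cmat = Xn * P ∧
      Xn.charpoly = X ^ n + ∑ k ∈ Finset.Icc 1 n,
        C ((n.descFactorial k : ℂ) * q k) * X ^ (n - k) := by
  have hkey : ∀ s, 1 ≤ s → s ≤ n →
      ∑ t ∈ Finset.range s, q t * x (s - t) = -(s:ℂ) * q s := by
    intro s hs1 hsn
    rw [Finset.range_eq_Ico, Finset.sum_eq_sum_Ico_succ_bot (by omega : 0 < s)]
    have h1 : Finset.Ico (0+1) s = Finset.Icc 1 (s-1) := by
      rw [← Finset.Ico_add_one_right_eq_Icc]
      congr 1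
      omega
    rw [h1]
    have := hnewton s hs1 hsn
    rw [hq0, Nat.sub_zero]
    linear_combination this
  have hmat : P * Cmat = Xn * P := by
    ext i j
    have hin : (i:ℕ) < n := i.isLt
    have hjn : (j:ℕ) < n := j.isLt
    set iv := (i:ℕ) with hiv
    set jv := (j:ℕ) with hjv
    set D : ℂ := (n.descFactorial (n - jv) : ℂ) * q (n - jv) with hD
    set Pf : ℕ → ℂ := fun k => if k ≤ iv then q (iv - k) / (k.factorial : ℂ) else 0 with hPf
    set Pg : ℕ → ℂ := fun k => if jv ≤ k then q (k - jv) / (jv.factorial : ℂ) else 0 with hPg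
    rw [Matrix.mul_apply, Matrix.mul_apply]
    -- LHS
    have hLent : ∀ k : Fin n, P i k * Cmat k j
        = Pf (k:ℕ) * ((if jv = (k:ℕ)+1 then (1:ℂ) else 0) + (if (k:ℕ) = n-1 then -D else 0)) := by
      intro k
      rw [hP, hC, hPf]
      congr 1
      by_cases h1 : jv = (k:ℕ)+1
      · rw [if_pos h1, if_pos h1, if_neg (by omega), add_zero]
      · rw [if_neg h1, if_neg h1, zero_add]
    have hLHS : ∑ k : Fin n, P i k * Cmat k j
        = ∑ k ∈ Finset.range n, Pf k * ((if jv = k+1 then (1:ℂ) else 0) + (if k = n-1 then -D else 0)) := by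
      rw [← Fin.sum_univ_eq_sum_range
        (fun k => Pf k * ((if jv = k+1 then (1:ℂ) else 0) + (if k = n-1 then -D else 0))) n]
      exact Finset.sum_congr rfl fun k _ => hLent k
    rw [hLHS]
    simp only [mul_add, Finset.sum_add_distrib]
    have hS2 : ∑ k ∈ Finset.range n, Pf k * (if k = n-1 then -D else 0) = Pf (n-1) * (-D) := by
      rw [Finset.sum_eq_single_of_mem (n-1) (Finset.mem_range.mpr (by omega))]
      · rw [if_pos rfl]
      · intro k _ hk
        rw [if_neg hk, mul_zero]
    have hS1 : ∑ k ∈ Finset.range n, Pf k * (if jv = k+1 then (1:ℂ) else 0)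
        = if 1 ≤ jv then Pf (jv - 1) else 0 := by
      by_cases hj0 : 1 ≤ jv
      · rw [if_pos hj0]
        rw [Finset.sum_eq_single_of_mem (jv-1) (Finset.mem_range.mpr (by omega))]
        · rw [if_pos (by omega), mul_one]
        · intro k _ hk
          rw [if_neg (by omega), mul_zero]
      · rw [if_neg hj0]
        exact Finset.sum_eq_zero fun k _ => by rw [if_neg (by omega), mul_zero]
    rw [hS1, hS2]
    -- RHS
    have hRent : ∀ k : Fin n, Xn i k * P k j
        = ((if (k:ℕ) ≤ iv then x (iv - (k:ℕ) + 1) else 0)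
            + (if (k:ℕ) = iv+1 then ((k:ℕ):ℂ) else 0)) * Pg (k:ℕ) := by
      intro k
      rw [hXn, hP, hPg]
      congr 1
      by_cases h1 : (k:ℕ) ≤ iv
      · rw [if_pos h1, if_pos h1, if_neg (by omega), add_zero]
      · rw [if_neg h1, if_neg h1, zero_add]
    have hRHS : ∑ k : Fin n, Xn i k * P k j
        = ∑ k ∈ Finset.range n, ((if k ≤ iv then x (iv - k + 1) else 0)
            + (if k = iv+1 then (k:ℂ) else 0)) * Pg k := by
      rw [← Fin.sum_univ_eq_sum_range
        (fun k => ((if k ≤ iv then x (iv - k + 1) else 0) + (if k = iv+1 then (k:ℂ) else 0)) * Pg k) n]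
      exact Finset.sum_congr rfl fun k _ => hRent k
    rw [hRHS]
    simp only [add_mul, Finset.sum_add_distrib]
    have hT2 : ∑ k ∈ Finset.range n, (if k = iv+1 then (k:ℂ) else 0) * Pg k
        = if iv+1 < n then ((iv:ℂ)+1) * Pg (iv+1) else 0 := by
      by_cases hi1 : iv+1 < n
      · rw [if_pos hi1]
        rw [Finset.sum_eq_single_of_mem (iv+1) (Finset.mem_range.mpr hi1)]
        · rw [if_pos rfl]
          push_cast
          ring
        · intro k _ hk
          rw [if_neg hk, zero_mul]
      · rw [if_neg hi1]
        exact Finset.sum_eq_zero fun k hk => by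
          rw [Finset.mem_range] at hk
          rw [if_neg (by omega), zero_mul]
    have hT1 : ∑ k ∈ Finset.range n, (if k ≤ iv then x (iv - k + 1) else 0) * Pg k
        = (∑ t ∈ Finset.range (iv+1-jv), q t * x ((iv-jv+1) - t)) / (jv.factorial : ℂ) := by
      have e1 : ∀ k, (if k ≤ iv then x (iv - k + 1) else 0) * Pg k
          = if k ≤ iv then x (iv - k + 1) * Pg k else 0 := by
        intro k; split_ifs <;> simp
      simp only [e1]
      rw [← Finset.sum_filter]
      have e2 : (Finset.range n).filter (fun k => k ≤ iv) = Finset.range (iv+1) := by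
        ext k; simp [Finset.mem_filter, Finset.mem_range]; omega
      rw [e2]
      have e3 : ∀ k, x (iv - k + 1) * Pg k
          = if jv ≤ k then x (iv - k + 1) * q (k - jv) / (jv.factorial : ℂ) else 0 := by
        intro k
        by_cases h : jv ≤ k
        · simp only [hPg, if_pos h, mul_div_assoc]
        · simp only [hPg, if_neg h, mul_zero]
      simp only [e3]
      rw [← Finset.sum_filter]
      have e4 : (Finset.range (iv+1)).filter (fun k => jv ≤ k) = Finset.Ico jv (iv+1) := by
        ext k; simp [Finset.mem_filter, Finset.mem_range, Finset.mem_Ico]; omega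
      rw [e4, Finset.sum_Ico_eq_sum_range]
      rw [Finset.sum_div]
      refine Finset.sum_congr rfl fun t ht => ?_
      rw [Finset.mem_range] at ht
      have e5 : jv + t - jv = t := by omega
      have e6 : iv - (jv + t) + 1 = (iv - jv + 1) - t := by omega
      rw [e5, e6]
      ring
    rw [hT1, hT2]
    -- now pure algebra, case split
    have hfac : ∀ m : ℕ, ((m.factorial : ℂ)) ≠ 0 := fun m => Nat.cast_ne_zero.mpr m.factorial_ne_zero
    by_cases hilast : iv = n - 1
    · -- last row
      have hT2z : ¬ (iv + 1 < n) := by omega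
      rw [if_neg hT2z, add_zero]
      have hs : 1 ≤ n - jv := by omega
      have hsum : ∑ t ∈ Finset.range (iv+1-jv), q t * x ((iv-jv+1) - t)
          = -(((n-jv : ℕ)):ℂ) * q (n-jv) := by
        have e7 : iv + 1 - jv = n - jv := by omega
        have e8 : iv - jv + 1 = n - jv := by omega
        rw [e7, e8]
        exact hkey (n-jv) hs (by omega)
      rw [hsum]
      have hPfn : Pf (n-1) = 1 / ((n-1).factorial : ℂ) := by
        rw [hPf]
        simp only
        rw [if_pos (by omega), show iv - (n-1) = 0 by omega, hq0]
      rw [hPfn]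
      have hdf : ((n.descFactorial (n - jv) : ℂ)) * (jv.factorial : ℂ) = (n.factorial : ℂ) := by
        have := Nat.factorial_mul_descFactorial (show n - jv ≤ n by omega)
        have e9 : n - (n - jv) = jv := by omega
        rw [e9] at this
        exact_mod_cast congrArg (Nat.cast : ℕ → ℂ) (by rw [mul_comm]; exact this)
      have hnfac : (n:ℂ) * ((n-1).factorial : ℂ) = (n.factorial : ℂ) := by
        exact_mod_cast congrArg (Nat.cast : ℕ → ℂ) (Nat.mul_factorial_pred (by omega))
      by_cases hj0 : 1 ≤ jv
      · rw [if_pos hj0]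
        have hPfj : Pf (jv - 1) = q (n - jv) / ((jv-1).factorial : ℂ) := by
          rw [hPf]
          simp only
          rw [if_pos (by omega), show iv - (jv - 1) = n - jv by omega]
        rw [hPfj, hD]
        have hjfac : (jv:ℂ) * ((jv-1).factorial : ℂ) = (jv.factorial : ℂ) := by
          exact_mod_cast congrArg (Nat.cast : ℕ → ℂ) (Nat.mul_factorial_pred (by omega))
        have hcast : ((n-jv : ℕ) : ℂ) = (n:ℂ) - (jv:ℂ) := by
          push_cast [Nat.cast_sub (by omega : jv ≤ n)]
          ring
        have hjne : (jv:ℂ) ≠ 0 := Nat.cast_ne_zero.mpr (by omega)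
        rw [hcast]
        exact alg1 _ _ _ _ _ _ _ _ (hfac (jv-1)) (hfac (n-1)) hjne hjfac hnfac hdf
      · rw [if_neg hj0, zero_add]
        have hj00 : jv = 0 := by omega
        rw [hD, hj00]
        simp only [Nat.sub_zero, Nat.factorial_zero, Nat.cast_one, div_one]
        have hdn : ((n.descFactorial n : ℂ)) = (n.factorial : ℂ) := by
          exact_mod_cast congrArg (Nat.cast : ℕ → ℂ) (Nat.descFactorial_self n)
        exact alg3 _ _ _ _ _ (hfac (n-1)) hnfac hdn
    · -- not last row
      have hilt : iv + 1 < n := by omega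
      rw [if_pos hilt]
      have hPfz : Pf (n-1) = 0 := by
        rw [hPf]; simp only; rw [if_neg (by omega)]
      rw [hPfz, zero_mul, add_zero]
      by_cases hji : jv ≤ iv
      · have hs1 : 1 ≤ iv - jv + 1 := by omega
        have hsum : ∑ t ∈ Finset.range (iv+1-jv), q t * x ((iv-jv+1) - t)
            = -(((iv-jv+1 : ℕ)):ℂ) * q (iv-jv+1) := by
          rw [show iv + 1 - jv = iv - jv + 1 by omega]
          exact hkey (iv-jv+1) hs1 (by omega)
        rw [hsum]
        have hPgi : Pg (iv+1) = q (iv+1-jv) / (jv.factorial : ℂ) := by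
          rw [hPg]; simp only; rw [if_pos (by omega)]
        rw [hPgi]
        by_cases hj0 : 1 ≤ jv
        · rw [if_pos hj0]
          have hPfj : Pf (jv - 1) = q (iv - jv + 1) / ((jv-1).factorial : ℂ) := by
            rw [hPf]; simp only; rw [if_pos (by omega), show iv - (jv - 1) = iv - jv + 1 by omega]
          rw [hPfj]
          have hjfac : (jv:ℂ) * ((jv-1).factorial : ℂ) = (jv.factorial : ℂ) := by
            exact_mod_cast congrArg (Nat.cast : ℕ → ℂ) (Nat.mul_factorial_pred (by omega))
          have hcast : ((iv-jv+1 : ℕ) : ℂ) = (iv:ℂ) - (jv:ℂ) + 1 := by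
            push_cast [Nat.cast_sub (by omega : jv ≤ iv)]
            ring
          have hjne : (jv:ℂ) ≠ 0 := Nat.cast_ne_zero.mpr (by omega)
          rw [show iv + 1 - jv = iv - jv + 1 by omega, hcast]
          exact alg2 _ _ _ _ _ hjne hjfac
        · rw [if_neg hj0]
          have hj00 : jv = 0 := by omega
          rw [hj00]
          simp only [Nat.sub_zero, Nat.factorial_zero, Nat.cast_one, div_one]
          push_cast
          ring
      · -- jv > iv
        have hrz : Finset.range (iv+1-jv) = ∅ := by
          rw [Finset.range_eq_empty_iff]; omega
        rw [hrz, Finset.sum_empty, zero_div, zero_add]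
        by_cases hje : jv = iv + 1
        · rw [if_pos (by omega)]
          have hPfj : Pf (jv-1) = 1 / ((jv-1).factorial : ℂ) := by
            rw [hPf]; simp only; rw [if_pos (by omega), show iv - (jv-1) = 0 by omega, hq0]
          have hPgi : Pg (iv+1) = 1 / (jv.factorial : ℂ) := by
            rw [hPg]; simp only; rw [if_pos (by omega), show iv + 1 - jv = 0 by omega, hq0]
          rw [hPfj, hPgi]
          have hjfac : (jv:ℂ) * ((jv-1).factorial : ℂ) = (jv.factorial : ℂ) := by
            exact_mod_cast congrArg (Nat.cast : ℕ → ℂ) (Nat.mul_factorial_pred (by omega))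
          have : ((iv:ℂ)+1) = (jv:ℂ) := by
            rw [hje]; push_cast; ring
          rw [this]
          exact alg4 _ _ _ (Nat.cast_ne_zero.mpr (by omega)) hjfac
        · -- jv > iv + 1
          have hgz : Pg (iv+1) = 0 := by
            rw [hPg]; simp only; rw [if_neg (by omega)]
          rw [hgz, mul_zero]
          rw [if_pos (by omega)]
          have hPfj : Pf (jv-1) = 0 := by
            rw [hPf]; simp only; rw [if_neg (by omega)]
          rw [hPfj]

  refine ⟨hmat, ?_⟩
  have hPdet : IsUnit P.det := by
    have hlow : P.BlockTriangular OrderDual.toDual := by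
      intro a b hab
      have hab' : (a:ℕ) < (b:ℕ) := hab
      rw [hP, if_neg (by omega)]
    rw [Matrix.det_of_lowerTriangular P hlow, isUnit_iff_ne_zero]
    apply Finset.prod_ne_zero_iff.mpr
    intro a _
    rw [hP, if_pos le_rfl, Nat.sub_self, hq0]
    exact div_ne_zero one_ne_zero (Nat.cast_ne_zero.mpr (a:ℕ).factorial_ne_zero)
  have hchar : Xn.charpoly = Cmat.charpoly :=
    (charpoly_conj_aux P Cmat Xn hPdet hmat).symm
  have hCform : Cmat = Matrix.of fun i j : Fin n => if (j:ℕ) = (i:ℕ)+1 then (1:ℂ)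
      else if (i:ℕ) = n-1 then -((fun k => (n.descFactorial (n - k) : ℂ) * q (n - k)) (j:ℕ)) else 0 := by
    ext i j
    rw [hC]
    rfl
  rw [hchar, hCform, companion_charpoly n (fun k => (n.descFactorial (n - k) : ℂ) * q (n - k))]
  congr 1
  refine Finset.sum_bij' (fun j _ => n - j) (fun k _ => n - k) ?_ ?_ ?_ ?_ ?_ <;>
    intro a ha <;>
    simp only [Finset.mem_range, Finset.mem_Icc] at ha ⊢
  · omega
  · omega
  · omega
  · omega
  · rw [show n - (n - a) = a by omega]
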